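/- Let G = ℤ_{n₁} × ⋯ × ℤ_{n_d} with all n_i ≥ 2, let S be an inverse-closed subset of G∖{(0,…,0)}, and set S₀ = S ∪ {(0,…,0)}. A subset C of G is a perfect code in Cay(G, S) if and only if for each pair (I, g) with ∅ ≠ I ⊆ {1,…,d} and g = (g₁,…,g_d) ∈ G there exists a polynomial q_I^{(g)}(x₁,…,x_d) ∈ ℤ[x₁,…,x_d] divisible by (∏_{i=1}^d x_i^{g_i})·(∏_{i∈I}(x_i^{n_i} − 1)) such that f_C(x₁,…,x_d)·f_{S₀}(x₁,…,x_d) = Σ_{∅≠I⊆{1,…,d}} Σ_{g∈G} q_I^{(g)}(x₁,…,x_d) + ∏_{i=1}^d (Σ_{j=0}^{n_i−1} x_i^j). -/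

import Mathlib

/-- The Cayley graph of an additive group `G` with connection set `S`.
(When `S` is inverse-closed and does not contain `0`, `x` and `y` are adjacent
iff `y - x ∈ S`.) -/
def cayley {G : Type*} [AddGroup G] (S : Set G) : SimpleGraph G :=
  SimpleGraph.fromRel (fun x y => y - x ∈ S)

/-- A perfect code in a graph: an independent set such that every vertex outside it
has exactly one neighbour in it. -/
def IsPerfectCode {V : Type*} (Γ : SimpleGraph V) (C : Set V) : Prop :=
  (∀ x ∈ C, ∀ y ∈ C, ¬ Γ.Adj x y) ∧ ∀ v, v ∉ C → ∃! c, c ∈ C ∧ Γ.Adj v c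

/-- A total perfect code in a graph: every vertex has exactly one neighbour in it. -/
def IsTotalPerfectCode {V : Type*} (Γ : SimpleGraph V) (C : Set V) : Prop :=
  ∀ v, ∃! c, c ∈ C ∧ Γ.Adj v c

/-- The subgroup of periods of a subset `X` of an abelian group:
`{g | X + g = X}`. -/
def periods {G : Type*} [AddCommGroup G] (X : Set G) : AddSubgroup G where
  carrier := {g | ∀ x : G, x + g ∈ X ↔ x ∈ X}
  zero_mem' := by simp
  add_mem' := by
    intro a b ha hb x
    rw [← add_assoc]
    exact (hb _).trans (ha x)
  neg_mem' := by
    intro a ha x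
    have := ha (x + -a)
    simpa using this.symm

/-- `(A, B)` is a factorization of the abelian group `G`: every element of `G` can be
uniquely written as `a + b` with `a ∈ A` and `b ∈ B`. -/
def IsFactorization {G : Type*} [AddCommGroup G] (A B : Set G) : Prop :=
  ∀ g : G, ∃! ab : G × G, ab.1 ∈ A ∧ ab.2 ∈ B ∧ ab.1 + ab.2 = g

/-- An abelian group is good if in every factorization of it into two factors
at least one factor is periodic. -/
def IsGood (G : Type*) [AddCommGroup G] : Prop :=
  ∀ A B : Set G, IsFactorization A B → periods A ≠ ⊥ ∨ periods B ≠ ⊥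

open MvPolynomial Finset

lemma cayley_adj {G : Type*} [AddCommGroup G] (S : Set G)
    (h0 : (0:G) ∉ S) (hinv : ∀ s ∈ S, -s ∈ S) (x y : G) :
    (cayley S).Adj x y ↔ y - x ∈ S := by
  simp only [cayley, SimpleGraph.fromRel_adj]
  constructor
  · rintro ⟨hne, h | h⟩
    · exact h
    · simpa using hinv _ h
  · intro h
    refine ⟨?_, Or.inl h⟩
    rintro rfl
    simp only [sub_self] at h
    exact h0 h

lemma pc_iff_unique {G : Type*} [AddCommGroup G] (S : Set G)
    (h0 : (0:G) ∉ S) (hinv : ∀ s ∈ S, -s ∈ S) (C : Set G) :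
    IsPerfectCode (cayley S) C ↔
      ∀ v : G, ∃! p : G × G, p.1 ∈ C ∧ p.2 ∈ insert (0:G) S ∧ p.1 + p.2 = v := by
  constructor
  · rintro ⟨hind, hnb⟩ v
    by_cases hv : v ∈ C
    · refine ⟨(v, 0), ⟨hv, Set.mem_insert _ _, add_zero v⟩, ?_⟩
      rintro ⟨c, s⟩ ⟨hc, hs, hsum⟩
      rcases hs with rfl | hs
      · simp only [add_zero] at hsum; simp [hsum]
      · exfalso
        exact hind c hc v hv ((cayley_adj S h0 hinv c v).2 (by rw [← hsum]; simpa))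
    · obtain ⟨c₀, ⟨hc₀, hadj⟩, huniq⟩ := hnb v hv
      have hs₀ : v - c₀ ∈ S := by
        have := (cayley_adj S h0 hinv v c₀).1 hadj
        simpa using hinv _ this
      refine ⟨(c₀, v - c₀), ⟨hc₀, Set.mem_insert_of_mem _ hs₀, by simp⟩, ?_⟩
      rintro ⟨c, s⟩ ⟨hc, hs, hsum⟩
      rcases hs with rfl | hs
      · exfalso; simp only [add_zero] at hsum; exact hv (hsum ▸ hc)
      · have hceq : c = c₀ := by
          refine huniq c ⟨hc, (cayley_adj S h0 hinv v c).2 ?_⟩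
          have : s = v - c := by rw [← hsum]; abel
          rw [this] at hs
          simpa using hinv _ hs
        have : s = v - c₀ := by rw [← hceq, ← hsum]; abel
        simp [hceq, this]
  · intro h
    constructor
    · intro x hx y hy hadj
      have hxy : y - x ∈ S := (cayley_adj S h0 hinv x y).1 hadj
      have h1 : ((y, (0:G)) : G × G) = (x, y - x) :=
        ((h y).unique ⟨hy, Set.mem_insert _ _, add_zero y⟩
          ⟨hx, Set.mem_insert_of_mem _ hxy, by simp⟩)
      have : (0:G) = y - x := congrArg Prod.snd h1
      rw [← this] at hxy
      exact h0 hxy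
    · intro v hv
      obtain ⟨⟨c, s⟩, ⟨hc, hs, hsum⟩, huniq⟩ := h v
      rcases hs with rfl | hs
      · exfalso; simp only [add_zero] at hsum; exact hv (hsum ▸ hc)
      refine ⟨c, ⟨hc, (cayley_adj S h0 hinv v c).2 ?_⟩, ?_⟩
      · have : s = v - c := by rw [← hsum]; abel
        rw [this] at hs
        simpa using hinv _ hs
      · rintro c' ⟨hc', hadj'⟩
        have hs' : v - c' ∈ S := by
          have := (cayley_adj S h0 hinv v c').1 hadj'
          simpa using hinv _ this
        have := huniq (c', v - c') ⟨hc', Set.mem_insert_of_mem _ hs', by simp⟩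
        exact congrArg Prod.fst this



lemma card_filter_eq_one_iff {α : Type*} (s : Finset α) (p : α → Prop) [DecidablePred p] :
    (s.filter p).card = 1 ↔ ∃! a, a ∈ s ∧ p a := by
  rw [Finset.card_eq_one]
  constructor
  · rintro ⟨a, ha⟩
    obtain ⟨h1, h2⟩ := Finset.eq_singleton_iff_unique_mem.mp ha
    rw [Finset.mem_filter] at h1
    exact ⟨a, h1, fun x hx => h2 x (Finset.mem_filter.mpr hx)⟩
  · rintro ⟨a, ⟨has, hpa⟩, hu⟩
    exact ⟨a, Finset.eq_singleton_iff_unique_mem.mpr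
      ⟨Finset.mem_filter.mpr ⟨has, hpa⟩, fun x hx => hu x (Finset.mem_filter.mp hx)⟩⟩

lemma prodsum (d : ℕ) (n : Fin d → ℕ) [∀ i, NeZero (n i)] :
    ∏ i, ∑ j ∈ Finset.range (n i), (X i : MvPolynomial (Fin d) ℤ) ^ j =
      ∑ g : ∀ i, ZMod (n i), ∏ i, (X i : MvPolynomial (Fin d) ℤ) ^ (g i).val := by
  rw [Finset.prod_univ_sum]
  refine Finset.sum_nbij' (fun p => fun i => ((p i : ZMod (n i)))) (fun g => fun i => (g i).val)
    ?_ ?_ ?_ ?_ ?_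
  · intro p hp; exact Finset.mem_univ _
  · intro g hg
    simp only [Fintype.mem_piFinset, Finset.mem_range]
    exact fun i => ZMod.val_lt _
  · intro p hp
    simp only [Fintype.mem_piFinset, Finset.mem_range] at hp
    funext i
    exact ZMod.val_cast_of_lt (hp i)
  · intro g hg
    funext i
    simp [ZMod.natCast_val, ZMod.cast_id]
  · intro p hp
    simp only [Fintype.mem_piFinset, Finset.mem_range] at hp
    exact Finset.prod_congr rfl fun i _ => by rw [ZMod.val_cast_of_lt (hp i)]


lemma val_add_split {m : ℕ} [NeZero m] (a b : ZMod m) :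
    a.val + b.val = (a + b).val + (if m ≤ a.val + b.val then m else 0) := by
  have ha := ZMod.val_lt a
  have hb := ZMod.val_lt b
  rw [ZMod.val_add]
  rcases lt_or_ge (a.val + b.val) m with h | h
  · rw [Nat.mod_eq_of_lt h, if_neg (not_le.mpr h)]
    omega
  · rw [if_pos h, Nat.mod_eq_sub_mod h, Nat.mod_eq_of_lt (by omega)]
    omega

lemma mon_mul_mon (d : ℕ) (n : Fin d → ℕ) [∀ i, NeZero (n i)] (c s : ∀ i, ZMod (n i)) :
    (∏ i, (X i : MvPolynomial (Fin d) ℤ) ^ (c i).val) * (∏ i, (X i : MvPolynomial (Fin d) ℤ) ^ (s i).val) =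
      ∑ J ∈ (Finset.univ.filter (fun i => n i ≤ (c i).val + (s i).val)).powerset,
        (∏ i, (X i : MvPolynomial (Fin d) ℤ) ^ ((c + s) i).val) *
          ∏ j ∈ J, ((X j : MvPolynomial (Fin d) ℤ) ^ (n j) - 1) := by
  rw [← Finset.prod_mul_distrib]
  have step1 : ∀ i : Fin d, (X i : MvPolynomial (Fin d) ℤ) ^ (c i).val * X i ^ (s i).val
      = X i ^ ((c + s) i).val * X i ^ (if n i ≤ (c i).val + (s i).val then n i else 0) := by
    intro i
    simp only [Pi.add_apply]
    rw [← pow_add, ← pow_add, ← val_add_split (c i) (s i)]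
  rw [Finset.prod_congr rfl fun i _ => step1 i, Finset.prod_mul_distrib]
  have step2 : (∏ i, (X i : MvPolynomial (Fin d) ℤ) ^ (if n i ≤ (c i).val + (s i).val then n i else 0))
      = ∏ i ∈ Finset.univ.filter (fun i => n i ≤ (c i).val + (s i).val), (X i : MvPolynomial (Fin d) ℤ) ^ (n i) := by
    rw [Finset.prod_filter]
    refine Finset.prod_congr rfl fun i _ => ?_
    split <;> simp
  rw [step2]
  have step3 : (∏ i ∈ Finset.univ.filter (fun i => n i ≤ (c i).val + (s i).val), (X i : MvPolynomial (Fin d) ℤ) ^ (n i))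
      = ∑ J ∈ (Finset.univ.filter (fun i => n i ≤ (c i).val + (s i).val)).powerset,
          ∏ j ∈ J, ((X j : MvPolynomial (Fin d) ℤ) ^ (n j) - 1) := by
    have : ∀ i ∈ Finset.univ.filter (fun i => n i ≤ (c i).val + (s i).val),
        (X i : MvPolynomial (Fin d) ℤ) ^ (n i) = ((X i : MvPolynomial (Fin d) ℤ) ^ (n i) - 1) + 1 := by
      intro i _; ring
    rw [Finset.prod_congr rfl this, Finset.prod_add]
    exact Finset.sum_congr rfl fun J _ => by simp
  rw [step3, Finset.mul_sum]
lemma forward_dir (d : ℕ) (n : Fin d → ℕ) [∀ i, NeZero (n i)]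
    (C S₀ : Finset (∀ i, ZMod (n i)))
    (hcard : ∀ v, ((C ×ˢ S₀).filter (fun p => p.1 + p.2 = v)).card = 1) :
    ∃ q : Finset (Fin d) → (∀ i, ZMod (n i)) → MvPolynomial (Fin d) ℤ,
        (∀ I : Finset (Fin d), I.Nonempty → ∀ g : ∀ i, ZMod (n i),
          ((∏ i, (X i : MvPolynomial (Fin d) ℤ) ^ (g i).val) *
            ∏ i ∈ I, ((X i : MvPolynomial (Fin d) ℤ) ^ (n i) - 1)) ∣ q I g) ∧
        (∑ c ∈ C, ∏ i, (X i : MvPolynomial (Fin d) ℤ) ^ (c i).val) *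
            (∑ s ∈ S₀, ∏ i, (X i : MvPolynomial (Fin d) ℤ) ^ (s i).val) =
          (∑ I ∈ Finset.univ.filter (Finset.Nonempty (α := Fin d)),
              ∑ g : ∀ i, ZMod (n i), q I g) +
            ∏ i, ∑ j ∈ Finset.range (n i), (X i : MvPolynomial (Fin d) ℤ) ^ j := by
  set mon : (∀ i, ZMod (n i)) → MvPolynomial (Fin d) ℤ := fun g => ∏ i, (X i : MvPolynomial (Fin d) ℤ) ^ (g i).val with hmon
  set Iset : (∀ i, ZMod (n i)) × (∀ i, ZMod (n i)) → Finset (Fin d) :=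
    fun p => Finset.univ.filter (fun i => n i ≤ (p.1 i).val + (p.2 i).val) with hIset
  set prodJ : Finset (Fin d)  → MvPolynomial (Fin d) ℤ := fun J => ∏ j ∈ J, ((X j : MvPolynomial (Fin d) ℤ) ^ (n j) - 1) with hprodJ
  refine ⟨fun J g =>
    ((((C ×ˢ S₀).filter (fun p => p.1 + p.2 = g ∧ J ⊆ Iset p)).card : MvPolynomial (Fin d) ℤ)) * (mon g * prodJ J),
    fun I _ g => ⟨_, by rw [mul_comm]⟩, ?_⟩
  -- LHS as a sum over pairs
  rw [Finset.sum_mul_sum, ← Finset.sum_product']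
  have key : ∀ p : (∀ i, ZMod (n i)) × (∀ i, ZMod (n i)),
      mon p.1 * mon p.2 = ∑ J ∈ (Iset p).powerset, mon (p.1 + p.2) * prodJ J :=
    fun p => mon_mul_mon d n p.1 p.2
  show (∑ p ∈ C ×ˢ S₀, mon p.1 * mon p.2) = _
  have h1 : (∑ p ∈ C ×ˢ S₀, mon (p.1 + p.2)) = ∏ i, ∑ j ∈ Finset.range (n i), (X i : MvPolynomial (Fin d) ℤ) ^ j := by
    calc ∑ p ∈ C ×ˢ S₀, mon (p.1 + p.2)
        = ∑ v ∈ Finset.univ, ∑ p ∈ (C ×ˢ S₀).filter (fun p => p.1 + p.2 = v), mon (p.1 + p.2) :=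
          (Finset.sum_fiberwise (C ×ˢ S₀) (fun p => p.1 + p.2) (fun p => mon (p.1 + p.2))).symm
      _ = ∑ v : ∀ i, ZMod (n i), mon v := by
          refine Finset.sum_congr rfl fun v _ => ?_
          have hco : ∀ p ∈ (C ×ˢ S₀).filter (fun p => p.1 + p.2 = v),
              mon (p.1 + p.2) = mon v := fun p hp => by rw [(Finset.mem_filter.mp hp).2]
          rw [Finset.sum_congr rfl hco, Finset.sum_const, hcard v, one_smul]
      _ = ∏ i, ∑ j ∈ Finset.range (n i), (X i : MvPolynomial (Fin d) ℤ) ^ j :=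
          (prodsum d n).symm
  have h2 : (∑ I ∈ Finset.univ.filter (Finset.Nonempty (α := Fin d)), ∑ g : ∀ i, ZMod (n i),
        ((((C ×ˢ S₀).filter (fun p => p.1 + p.2 = g ∧ I ⊆ Iset p)).card : MvPolynomial (Fin d) ℤ)) * (mon g * prodJ I))
      = ∑ p ∈ C ×ˢ S₀, ∑ J ∈ ((Iset p).powerset).erase ∅, mon (p.1 + p.2) * prodJ J := by
    have step : ∀ J : Finset (Fin d),
        (∑ g : ∀ i, ZMod (n i), ((((C ×ˢ S₀).filter (fun p => p.1 + p.2 = g ∧ J ⊆ Iset p)).card : MvPolynomial (Fin d) ℤ)) * (mon g * prodJ J))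
        = ∑ p ∈ C ×ˢ S₀, if J ⊆ Iset p then mon (p.1 + p.2) * prodJ J else 0 := by
      intro J
      rw [← Finset.sum_filter]
      have e1 : ∀ g : ∀ i, ZMod (n i),
          ((((C ×ˢ S₀).filter (fun p => p.1 + p.2 = g ∧ J ⊆ Iset p)).card : MvPolynomial (Fin d) ℤ)) * (mon g * prodJ J)
          = ∑ p ∈ ((C ×ˢ S₀).filter (fun p => J ⊆ Iset p)).filter (fun p => p.1 + p.2 = g),
              mon (p.1 + p.2) * prodJ J := by
        intro g
        rw [Finset.filter_filter]
        have e2 : ∀ p ∈ (C ×ˢ S₀).filter (fun p => J ⊆ Iset p ∧ p.1 + p.2 = g),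
            mon (p.1 + p.2) * prodJ J = mon g * prodJ J := by
          intro p hp
          rw [(Finset.mem_filter.mp hp).2.2]
        rw [Finset.sum_congr rfl e2, Finset.sum_const, nsmul_eq_mul]
        have hfe : (C ×ˢ S₀).filter (fun p => p.1 + p.2 = g ∧ J ⊆ Iset p)
            = (C ×ˢ S₀).filter (fun p => J ⊆ Iset p ∧ p.1 + p.2 = g) :=
          Finset.filter_congr fun p _ => by tauto
        rw [hfe]
      have hcg := Finset.sum_congr rfl fun g (_ : g ∈ Finset.univ) => e1 g
      rw [hcg]
      exact Finset.sum_fiberwise ((C ×ˢ S₀).filter (fun p => J ⊆ Iset p)) (fun p => p.1 + p.2)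
        (fun p => mon (p.1 + p.2) * prodJ J)
    rw [Finset.sum_congr rfl fun J _ => step J, Finset.sum_comm]
    refine Finset.sum_congr rfl fun p _ => ?_
    rw [← Finset.sum_filter]
    refine Finset.sum_congr ?_ fun _ _ => rfl
    ext J
    simp only [Finset.mem_filter, Finset.mem_univ, true_and, Finset.mem_erase,
      Finset.mem_powerset, Finset.nonempty_iff_ne_empty]
    try tauto
  calc ∑ p ∈ C ×ˢ S₀, mon p.1 * mon p.2
      = ∑ p ∈ C ×ˢ S₀, ∑ J ∈ (Iset p).powerset, mon (p.1 + p.2) * prodJ J :=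
        Finset.sum_congr rfl fun p _ => key p
    _ = ∑ p ∈ C ×ˢ S₀, (mon (p.1 + p.2) +
          ∑ J ∈ ((Iset p).powerset).erase ∅, mon (p.1 + p.2) * prodJ J) := by
        refine Finset.sum_congr rfl fun p _ => ?_
        rw [← Finset.add_sum_erase _ _ (Finset.empty_mem_powerset _)]
        simp [hprodJ]
    _ = (∑ p ∈ C ×ˢ S₀, mon (p.1 + p.2)) +
          ∑ p ∈ C ×ˢ S₀, ∑ J ∈ ((Iset p).powerset).erase ∅, mon (p.1 + p.2) * prodJ J :=
        Finset.sum_add_distrib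
    _ = _ := by rw [h1, ← h2, add_comm]
section phi
variable (d : ℕ) (n : Fin d → ℕ) [∀ i, NeZero (n i)]

noncomputable def phi : MvPolynomial (Fin d) ℤ →ₐ[ℤ] AddMonoidAlgebra ℤ (∀ i, ZMod (n i)) :=
  MvPolynomial.aeval (fun i => AddMonoidAlgebra.single (Pi.single i (1 : ZMod (n i))) (1 : ℤ))

lemma smul_pi_single (k : ℕ) (i : Fin d) (x : ZMod (n i)) :
    k • Pi.single (M := fun i => ZMod (n i)) i x = Pi.single i (k • x) := by
  funext j
  by_cases h : j = i
  · subst h; simp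
  · simp [Pi.single_eq_of_ne h]

lemma phi_pow (i : Fin d) (k : ℕ) :
    phi d n ((X i : MvPolynomial (Fin d) ℤ) ^ k) =
      AddMonoidAlgebra.single (Pi.single i (k : ZMod (n i))) (1 : ℤ) := by
  rw [map_pow, phi, MvPolynomial.aeval_X, AddMonoidAlgebra.single_pow, one_pow,
    smul_pi_single, nsmul_eq_mul, mul_one]

lemma phi_mon (g : ∀ i, ZMod (n i)) :
    phi d n (∏ i, (X i : MvPolynomial (Fin d) ℤ) ^ (g i).val) =
      AddMonoidAlgebra.single g (1 : ℤ) := by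
  rw [map_prod]
  have : ∀ i : Fin d, phi d n ((X i : MvPolynomial (Fin d) ℤ) ^ (g i).val) =
      AddMonoidAlgebra.single (Pi.single i (g i)) (1 : ℤ) := by
    intro i
    rw [phi_pow]
    congr
    simp [ZMod.natCast_val, ZMod.cast_id]
  rw [Finset.prod_congr rfl fun i _ => this i, AddMonoidAlgebra.prod_single]
  simp [Finset.univ_sum_single]

lemma phi_xn (i : Fin d) :
    phi d n ((X i : MvPolynomial (Fin d) ℤ) ^ (n i) - 1) = 0 := by
  rw [map_sub, map_one, phi_pow]
  have : ((n i : ZMod (n i))) = 0 := ZMod.natCast_self (n i)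
  rw [this]
  simp [AddMonoidAlgebra.one_def]

end phi

lemma backward_dir (d : ℕ) (n : Fin d → ℕ) [∀ i, NeZero (n i)]
    (C S₀ : Finset (∀ i, ZMod (n i)))
    (q : Finset (Fin d) → (∀ i, ZMod (n i)) → MvPolynomial (Fin d) ℤ)
    (hdvd : ∀ I : Finset (Fin d), I.Nonempty → ∀ g : ∀ i, ZMod (n i),
          ((∏ i, (X i : MvPolynomial (Fin d) ℤ) ^ (g i).val) *
            ∏ i ∈ I, ((X i : MvPolynomial (Fin d) ℤ) ^ (n i) - 1)) ∣ q I g)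
    (heq : (∑ c ∈ C, ∏ i, (X i : MvPolynomial (Fin d) ℤ) ^ (c i).val) *
            (∑ s ∈ S₀, ∏ i, (X i : MvPolynomial (Fin d) ℤ) ^ (s i).val) =
          (∑ I ∈ Finset.univ.filter (Finset.Nonempty (α := Fin d)),
              ∑ g : ∀ i, ZMod (n i), q I g) +
            ∏ i, ∑ j ∈ Finset.range (n i), (X i : MvPolynomial (Fin d) ℤ) ^ j)
    (v : ∀ i, ZMod (n i)) :
    ((C ×ˢ S₀).filter (fun p => p.1 + p.2 = v)).card = 1 := by
  rw [prodsum d n] at heq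
  have happ := congrArg (phi d n) heq
  simp only [map_mul, map_add, map_sum] at happ
  have hq0 : ∀ I ∈ Finset.univ.filter (Finset.Nonempty (α := Fin d)),
      ∀ g : ∀ i, ZMod (n i), phi d n (q I g) = 0 := by
    intro I hI g
    have hIne : I.Nonempty := (Finset.mem_filter.mp hI).2
    obtain ⟨r, hr⟩ := hdvd I hIne g
    obtain ⟨i₀, hi₀⟩ := hIne
    rw [hr, map_mul, map_mul]
    have hz : (phi d n) (∏ i ∈ I, ((X i : MvPolynomial (Fin d) ℤ) ^ (n i) - 1)) = 0 := by
      rw [map_prod]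
      exact Finset.prod_eq_zero hi₀ (phi_xn d n i₀)
    rw [hz]
    ring
  have hsum0 : ∀ I ∈ Finset.univ.filter (Finset.Nonempty (α := Fin d)),
      (∑ g : ∀ i, ZMod (n i), phi d n (q I g)) = 0 := fun I hI =>
    Finset.sum_eq_zero fun g _ => hq0 I hI g
  rw [Finset.sum_congr rfl hsum0, Finset.sum_const, smul_zero, zero_add] at happ
  have hmonC : ∀ c : ∀ i, ZMod (n i),
      phi d n (∏ i, (X i : MvPolynomial (Fin d) ℤ) ^ (c i).val)
        = AddMonoidAlgebra.single c (1 : ℤ) := phi_mon d n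
  rw [Finset.sum_congr rfl fun c _ => hmonC c, Finset.sum_congr rfl fun s _ => hmonC s,
    Finset.sum_congr rfl fun g _ => hmonC g] at happ
  rw [Finset.sum_mul_sum] at happ
  have hmul : ∀ c ∈ C, ∀ s ∈ S₀, AddMonoidAlgebra.single c (1:ℤ) * AddMonoidAlgebra.single s 1
      = AddMonoidAlgebra.single (c + s) 1 := by
    intro c _ s _
    rw [AddMonoidAlgebra.single_mul_single, mul_one]
  rw [Finset.sum_congr rfl fun c hc => Finset.sum_congr rfl fun s hs => hmul c hc s hs,
    ← Finset.sum_product'] at happ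
  have happ' : (∑ x ∈ C ×ˢ S₀, Finsupp.single (x.1 + x.2) (1:ℤ))
      = ∑ g : ∀ i, ZMod (n i), Finsupp.single g (1:ℤ) := by
    simpa only [AddMonoidAlgebra.coeff_sum, AddMonoidAlgebra.coeff_single] using
      congrArg AddMonoidAlgebra.coeff happ
  have happv := congrArg (fun f : (∀ i, ZMod (n i)) →₀ ℤ => f v) happ'
  simp only [Finsupp.finset_sum_apply, Finsupp.single_apply] at happv
  rw [Finset.sum_ite_eq' Finset.univ v (fun _ => (1:ℤ))] at happv
  simp only [Finset.mem_univ, if_true] at happv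
  rw [Finset.sum_boole] at happv
  exact_mod_cast happv

lemma unique_iff_card {G : Type*} [AddCommGroup G] [DecidableEq G]
    (C S : Finset G) (v : G) :
    (∃! p : G × G, p.1 ∈ (C : Set G) ∧ p.2 ∈ insert (0:G) (S : Set G) ∧ p.1 + p.2 = v) ↔
      ((C ×ˢ (insert 0 S)).filter (fun p => p.1 + p.2 = v)).card = 1 := by
  rw [card_filter_eq_one_iff]
  apply existsUnique_congr
  intro p
  simp [Finset.mem_product, and_assoc]

open MvPolynomial in
/-- Lemma 4.1: for `G = ℤ_{n₁} × ⋯ × ℤ_{n_d}` and an inverse-closed subset `S` of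
`G ∖ {0}` with `S₀ = S ∪ {0}`, a subset `C` of `G` is a perfect code in
`Cay(G, S)` iff there are integer polynomials `q_I^{(g)}`, each divisible by
`(∏ i, x_i^{g_i}) ⬝ ∏_{i ∈ I} (x_i^{n_i} - 1)`, with
`f_C ⬝ f_{S₀} = Σ_{∅ ≠ I} Σ_g q_I^{(g)} + ∏ i (1 + x_i + ⋯ + x_i^{n_i - 1})`. -/
theorem perfectCode_iff_polynomial (d : ℕ) (hd : 1 ≤ d) (n : Fin d → ℕ)
    (hn : ∀ i, 2 ≤ n i) [∀ i, NeZero (n i)]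
    (S : Finset (∀ i, ZMod (n i))) (h0 : (0 : ∀ i, ZMod (n i)) ∉ S)
    (hinv : ∀ s ∈ S, -s ∈ S) (C : Finset (∀ i, ZMod (n i))) :
    IsPerfectCode (cayley (S : Set (∀ i, ZMod (n i)))) (C : Set (∀ i, ZMod (n i))) ↔
      ∃ q : Finset (Fin d) → (∀ i, ZMod (n i)) → MvPolynomial (Fin d) ℤ,
        (∀ I : Finset (Fin d), I.Nonempty → ∀ g : ∀ i, ZMod (n i),
          ((∏ i, (X i : MvPolynomial (Fin d) ℤ) ^ (g i).val) *
            ∏ i ∈ I, ((X i : MvPolynomial (Fin d) ℤ) ^ (n i) - 1)) ∣ q I g) ∧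
        (∑ c ∈ C, ∏ i, (X i : MvPolynomial (Fin d) ℤ) ^ (c i).val) *
            (∑ s ∈ insert 0 S, ∏ i, (X i : MvPolynomial (Fin d) ℤ) ^ (s i).val) =
          (∑ I ∈ Finset.univ.filter (Finset.Nonempty (α := Fin d)),
              ∑ g : ∀ i, ZMod (n i), q I g) +
            ∏ i, ∑ j ∈ Finset.range (n i), (X i : MvPolynomial (Fin d) ℤ) ^ j := by
  have h0' : (0 : ∀ i, ZMod (n i)) ∉ (S : Set (∀ i, ZMod (n i))) := by simpa using h0
  have hinv' : ∀ s ∈ (S : Set (∀ i, ZMod (n i))), -s ∈ (S : Set (∀ i, ZMod (n i))) := by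
    intro s hs
    simpa using hinv s (by simpa using hs)
  rw [pc_iff_unique (S : Set (∀ i, ZMod (n i))) h0' hinv' (C : Set (∀ i, ZMod (n i)))]
  constructor
  · intro h
    exact forward_dir d n C (insert 0 S) fun v => (unique_iff_card C S v).1 (h v)
  · rintro ⟨q, hdvd, heq⟩
    intro v
    exact (unique_iff_card C S v).2 (backward_dir d n C (insert 0 S) q hdvd heq v)
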